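/- Suppose z₁, z₂, z₃ : ℝ → ℂ are differentiable and satisfy z₁' = 2·conj(z₂ z₃), z₂' = -2·conj(z₃ z₁), z₃' = -2·conj(z₁ z₂). Then |z₁(t)|² + |z₂(t)|² is constant, and |z₁(t)|² + |z₃(t)|² is constant. -/

import Mathlib

lemma hasDerivAt_normSq {z : ℝ → ℂ} {z' : ℂ} {t : ℝ} (h : HasDerivAt z z' t) :
    HasDerivAt (fun t => ‖z t‖ ^ 2)
      (2 * ((z t).re * z'.re + (z t).im * z'.im)) t := by
  have hre : HasDerivAt (fun t => (z t).re) z'.re t :=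
    (Complex.reCLM.hasFDerivAt.comp_hasDerivAt t h)
  have him : HasDerivAt (fun t => (z t).im) z'.im t :=
    (Complex.imCLM.hasFDerivAt.comp_hasDerivAt t h)
  have := (hre.mul hre).add (him.mul him)
  have heq : (fun t => ‖z t‖ ^ 2) = fun t => (z t).re * (z t).re + (z t).im * (z t).im := by
    funext t
    rw [← Complex.normSq_apply, ← Complex.sq_norm]
  rw [heq]
  exact this.congr_deriv (by ring)

/-- For solutions of the reduced evolution equations, |z₁|² + |z₂|² and
|z₁|² + |z₃|² are constant. -/
theorem sum_norm_sq_constant (z₁ z₂ z₃ : ℝ → ℂ)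
    (h1 : ∀ t : ℝ, HasDerivAt z₁ (2 * (starRingEnd ℂ) (z₂ t * z₃ t)) t)
    (h2 : ∀ t : ℝ, HasDerivAt z₂ (-2 * (starRingEnd ℂ) (z₃ t * z₁ t)) t)
    (h3 : ∀ t : ℝ, HasDerivAt z₃ (-2 * (starRingEnd ℂ) (z₁ t * z₂ t)) t) :
    (∀ s t : ℝ, ‖z₁ s‖ ^ 2 + ‖z₂ s‖ ^ 2 = ‖z₁ t‖ ^ 2 + ‖z₂ t‖ ^ 2) ∧
    (∀ s t : ℝ, ‖z₁ s‖ ^ 2 + ‖z₃ s‖ ^ 2 = ‖z₁ t‖ ^ 2 + ‖z₃ t‖ ^ 2) := by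
  constructor
  · have key : ∀ t : ℝ, HasDerivAt (fun t => ‖z₁ t‖ ^ 2 + ‖z₂ t‖ ^ 2) 0 t := by
      intro t
      have h := (hasDerivAt_normSq (h1 t)).add (hasDerivAt_normSq (h2 t))
      refine h.congr_deriv ?_
      simp [Complex.mul_re, Complex.mul_im]
      ring
    intro s t
    exact is_const_of_deriv_eq_zero (fun x => (key x).differentiableAt)
      (fun x => (key x).deriv) s t
  · have key : ∀ t : ℝ, HasDerivAt (fun t => ‖z₁ t‖ ^ 2 + ‖z₃ t‖ ^ 2) 0 t := by
      intro t
      have h := (hasDerivAt_normSq (h1 t)).add (hasDerivAt_normSq (h3 t))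
      refine h.congr_deriv ?_
      simp [Complex.mul_re, Complex.mul_im]
      ring
    intro s t
    exact is_const_of_deriv_eq_zero (fun x => (key x).differentiableAt)
      (fun x => (key x).deriv) s t
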